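/- Let Γ be a set of pure z-filters on LMC(S). Then the following are equivalent: (b) given distinct 𝓛 and 𝓚 in Γ, there exists B ∈ 𝓚° such that for every A ∈ Z(LMC(S)), if S^LMC − int(cl ε(B)) ⊆ int(cl ε(A)) then A ∈ 𝓛; (b') for each p̃ ∈ S^LMC there is at most one 𝓛 ∈ Γ with 𝓛 ⊆ p̃. -/

import Mathlib

open Set Topology WeakDual BoundedContinuousFunction

noncomputable section

variable (S : Type*) [TopologicalSpace S] [T2Space S] [Semigroup S]

/-- Left translation `λ_s`, as a continuous map, given continuity of left translations. -/
def lamC (hl : ∀ s : S, Continuous (fun t => s * t)) (s : S) : C(S, S) :=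
  ⟨fun t => s * t, hl s⟩

/-- An m-admissible subalgebra of `CB(S) = S →ᵇ ℂ`. -/
structure MAdmissible (hl : ∀ s : S, Continuous (fun t => s * t)) : Type _ where
  carrier : StarSubalgebra ℂ (S →ᵇ ℂ)
  isClosed' : IsClosed (carrier : Set (S →ᵇ ℂ))
  leftInvariant : ∀ (s : S), ∀ f ∈ carrier, f.compContinuous (lamC S hl s) ∈ carrier
  mAdmissible : ∀ (μ : characterSpace ℂ carrier) (f : S →ᵇ ℂ) (hf : f ∈ carrier),
    ∃ g ∈ carrier, ∀ s : S,
      g s = μ ⟨f.compContinuous (lamC S hl s), leftInvariant s f hf⟩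

variable {hl : ∀ s : S, Continuous (fun t => s * t)}

/-- The spectrum `S^F` of an m-admissible subalgebra. -/
abbrev specF (F : MAdmissible S hl) : Type _ := characterSpace ℂ F.carrier

/-- Evaluation at a point, as an algebra homomorphism on `F`. -/
def evalHom (F : MAdmissible S hl) (s : S) : F.carrier →ₐ[ℂ] ℂ where
  toFun f := (f : S →ᵇ ℂ) s
  map_one' := rfl
  map_mul' _ _ := rfl
  map_zero' := rfl
  map_add' _ _ := rfl
  commutes' _ := rfl

/-- The evaluation map `ε : S → S^F`. -/
def epsF (F : MAdmissible S hl) (s : S) : specF S F :=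
  haveI : CompleteSpace F.carrier := IsClosed.completeSpace_coe (hs := F.isClosed')
  CharacterSpace.equivAlgHom.symm (evalHom S F s)

variable (F : MAdmissible S hl)

/-- `Z(F)`: the collection of zero sets of members of `F`. -/
def ZSet : Set (Set S) := {A | ∃ f ∈ F.carrier, A = {s : S | f s = 0}}

/-- z-filters on `F`. -/
def IsZFilter (𝒜 : Set (Set S)) : Prop :=
  𝒜 ⊆ ZSet S F ∧ ∅ ∉ 𝒜 ∧ Set.univ ∈ 𝒜 ∧
    (∀ A ∈ 𝒜, ∀ B ∈ 𝒜, A ∩ B ∈ 𝒜) ∧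
    ∀ A ∈ 𝒜, ∀ B ∈ ZSet S F, A ⊆ B → B ∈ 𝒜

/-- `FS`: the collection of z-ultrafilters on `F`. -/
def zUltra : Set (Set (Set S)) :=
  {p | IsZFilter S F p ∧ ∀ q, IsZFilter S F q → p ⊆ q → q = p}

/-- `cl ε(A)` in `S^F`. -/
def epsCl (A : Set S) : Set (specF S F) := closure (epsF S F '' A)

/-- `⋂_{A ∈ p} cl ε(A)`; for `p ∈ FS` this is the singleton of the corresponding point of `S^F`. -/
def core (p : Set (Set S)) : Set (specF S F) := ⋂ A ∈ p, epsCl S F A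

/-- `p̃ = ⋂ [p]`, the intersection of the equivalence class of `p`. -/
def tilde (p : Set (Set S)) : Set (Set S) :=
  ⋂₀ {q | q ∈ zUltra S F ∧ core S F q = core S F p}

/-- pure z-filters. -/
def IsPure (𝒜 : Set (Set S)) : Prop :=
  IsZFilter S F 𝒜 ∧ ∀ p ∈ zUltra S F, 𝒜 ⊆ p → 𝒜 ⊆ tilde S F p

/-- `bar(𝒜) = {p̃ : 𝒜 ⊆ p}`, viewed as a subset of `S^F` via the identification of
`p̃` with the point `μ` such that `⋂_{A ∈ p} cl ε(A) = {μ}`. -/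
def barSet (𝒜 : Set (Set S)) : Set (specF S F) :=
  {μ | ∃ p ∈ zUltra S F, 𝒜 ⊆ p ∧ core S F p = {μ}}

/-- `𝒜° = {A ∈ 𝒜 : bar(𝒜) ⊆ int cl ε(A)}`. -/
def circA (𝒜 : Set (Set S)) : Set (Set S) :=
  {A ∈ 𝒜 | barSet S F 𝒜 ⊆ interior (epsCl S F A)}

/-- `⋂ J`, the intersection of the z-filters `p̃` corresponding to points of `J ⊆ S^F`. -/
def interOf (J : Set (specF S F)) : Set (Set S) :=
  ⋂₀ {C | ∃ p ∈ zUltra S F, ∃ μ ∈ J, core S F p = {μ} ∧ C = tilde S F p}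

/-- `⋂ [p̃]_R` for a relation `r` on `S^F`. -/
def classInter (r : specF S F → specF S F → Prop) (μ : specF S F) : Set (Set S) :=
  interOf S F {ν | r μ ν}

/-- `Ω_ℬ(A) = {x ∈ S : λ_x⁻¹(A) ∈ ℬ}`. -/
def OmegaZ (ℬ : Set (Set S)) (A : Set S) : Set S := {x : S | (fun t => x * t) ⁻¹' A ∈ ℬ}

/-- `𝒜 + ℬ`. -/
def zsum (𝒜 ℬ : Set (Set S)) : Set (Set S) :=
  {A ∈ ZSet S F | ∀ F' ∈ ZSet S F, OmegaZ S ℬ A ⊆ F' → F' ∈ 𝒜}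

/-- `𝒜 ⊙ ℬ = ⋂ bar(𝒜 + ℬ)`. -/
def odot (𝒜 ℬ : Set (Set S)) : Set (Set S) :=
  interOf S F (barSet S F (zsum S F 𝒜 ℬ))

/-- topological choice functions for a set `Γ` of z-filters. -/
def IsTCF (Γ : Set (Set (Set S))) (f : Set (Set S) → Set S) : Prop :=
  ∀ L ∈ Γ, f L ∈ L ∧ barSet S F L ⊆ interior (epsCl S F (f L))

/-- `A* = {𝓛 ∈ Γ : bar(𝓛) ∩ cl ε(A) ≠ ∅}`. -/
def starSet (Γ : Set (Set (Set S))) (A : Set S) : Set Γ :=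
  {L : Γ | (barSet S F (L : Set (Set S)) ∩ epsCl S F A).Nonempty}

/-- `A_* = {𝓛 ∈ Γ : bar(𝓛) ⊆ cl ε(A)}`. -/
def lowStar (Γ : Set (Set (Set S))) (A : Set S) : Set Γ :=
  {L : Γ | barSet S F (L : Set (Set S)) ⊆ epsCl S F A}

/-- The `τ*` quotient topology on `Γ`. -/
def tauStar (Γ : Set (Set (Set S))) : TopologicalSpace Γ :=
  TopologicalSpace.generateFrom {U | ∃ A ∈ ZSet S F, U = (starSet S F Γ A)ᶜ}

/-- The `τ_*` quotient topology on `Γ`. -/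
def tauLow (Γ : Set (Set (Set S))) : TopologicalSpace Γ :=
  TopologicalSpace.generateFrom {U | ∃ A ∈ ZSet S F, U = (lowStar S F Γ A)ᶜ}

/-- `Γ` is a quotient of `S^F`: conditions (a) and (b) of Theorem 3.9. -/
def IsQuotientOf (Γ : Set (Set (Set S))) : Prop :=
  (∀ L ∈ Γ, IsPure S F L) ∧
  (∀ f : Set (Set S) → Set S, IsTCF S F Γ f →
    ∃ 𝓕 : Finset (Set (Set S)), ↑𝓕 ⊆ Γ ∧
      (Set.univ : Set (specF S F)) = ⋃ L ∈ 𝓕, interior (epsCl S F (f L))) ∧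
  (∀ L ∈ Γ, ∀ K ∈ Γ, L ≠ K →
    ∃ A ∈ circA S F L, ∃ B ∈ circA S F K, ∀ C ∈ Γ,
      (∀ H ∈ ZSet S F, (interior (epsCl S F A))ᶜ ⊆ interior (epsCl S F H) → H ∈ C) ∨
      (∀ T ∈ ZSet S F, (interior (epsCl S F B))ᶜ ⊆ interior (epsCl S F T) → T ∈ C))

/-- The defining property of the map `γ : S^F → Γ` sending `p̃` to the unique member of `Γ`
contained in `p̃`. -/
def IsGamma (Γ : Set (Set (Set S))) (γ : specF S F → Γ) : Prop :=
  ∀ (μ : specF S F) (p : Set (Set S)), p ∈ zUltra S F → core S F p = {μ} →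
    (γ μ : Set (Set S)) ⊆ tilde S F p

/-- The defining property of the multiplication of `S^F`: `(μν)(f) = μ(T_ν f)` where
`(T_ν f)(s) = ν(L_s f)`. -/
def IsSpecMul (mul : specF S F → specF S F → specF S F) : Prop :=
  ∀ (μ ν : specF S F) (f : S →ᵇ ℂ) (hf : f ∈ F.carrier) (g : S →ᵇ ℂ) (hg : g ∈ F.carrier),
    (∀ s : S, g s = ν ⟨f.compContinuous (lamC S hl s), F.leftInvariant s f hf⟩) →
    mul μ ν ⟨f, hf⟩ = μ ⟨g, hg⟩

/-- `LMC(S)`, as a subset of `CB(S)`. -/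
def LMCset (hl : ∀ s : S, Continuous (fun t => s * t)) : Set (S →ᵇ ℂ) :=
  {f | ∀ μ : characterSpace ℂ (S →ᵇ ℂ),
    Continuous fun s : S => μ (f.compContinuous (lamC S hl s))}

/-! ### Auxiliary development -/

set_option maxHeartbeats 2000000

section Aux

instance : CompleteSpace F.carrier := F.isClosed'.completeSpace_coe
instance : NormedCommRing F.carrier := { mul_comm := mul_comm }
instance : CStarAlgebra F.carrier := { }
instance : CommCStarAlgebra F.carrier := { }
instance : CompactSpace (specF S F) := by infer_instance
instance : NormalSpace (specF S F) := NormalSpace.of_compactSpace_r1Space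

variable {S F}

lemma eps_apply (s : S) (f : F.carrier) : (epsF S F s) f = (f : S →ᵇ ℂ) s := rfl

lemma gelfand_surj (k : C(specF S F, ℂ)) : ∃ g : F.carrier, ∀ φ : specF S F, φ g = k φ := by
  obtain ⟨g, hg⟩ := (gelfandStarTransform F.carrier).surjective k
  exact ⟨g, fun φ => by rw [← hg]; rfl⟩

lemma epsCl_closed {A : Set S} : IsClosed (epsCl S F A) := isClosed_closure

lemma epsCl_mono {A B : Set S} (h : A ⊆ B) : epsCl S F A ⊆ epsCl S F B :=
  closure_mono (Set.image_mono h)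

lemma eps_mem_epsCl {A : Set S} {s : S} (hs : s ∈ A) : epsF S F s ∈ epsCl S F A :=
  subset_closure (Set.mem_image_of_mem _ hs)

lemma epsCl_subset_closed {A : Set S} {C : Set (specF S F)} (hC : IsClosed C)
    (h : ∀ s ∈ A, epsF S F s ∈ C) : epsCl S F A ⊆ C :=
  closure_minimal (by rintro _ ⟨s, hs, rfl⟩; exact h s hs) hC

lemma eval_char_continuous (g : F.carrier) : Continuous fun φ : specF S F => φ g :=
  (WeakDual.eval_continuous (g : F.carrier)).comp continuous_subtype_val

lemma mem_of_eps_mem_epsCl {A : Set S} (hA : A ∈ ZSet S F) {s : S}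
    (hs : epsF S F s ∈ epsCl S F A) : s ∈ A := by
  obtain ⟨f, hf, rfl⟩ := hA
  have hC : IsClosed {φ : specF S F | φ ⟨f, hf⟩ = 0} :=
    isClosed_eq (eval_char_continuous _) continuous_const
  have hsub : epsCl S F {s : S | f s = 0} ⊆ {φ : specF S F | φ ⟨f, hf⟩ = 0} :=
    epsCl_subset_closed hC (fun s hs => by simpa [eps_apply] using hs)
  simpa [eps_apply] using hsub hs

lemma closure_range_eps : closure (Set.range (epsF S F)) = Set.univ := by
  by_contra h
  obtain ⟨μ, hμ⟩ := (Set.ne_univ_iff_exists_notMem _).mp h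
  obtain ⟨f, hf0, hf1, -⟩ := exists_continuous_zero_one_of_isClosed
    isClosed_closure (isClosed_singleton (x := μ))
    (Set.disjoint_singleton_right.mpr hμ)
  obtain ⟨g, hg⟩ := gelfand_surj ⟨fun x => (f x : ℂ), Complex.continuous_ofReal.comp f.continuous⟩
  have hgz : g = 0 := by
    apply Subtype.ext
    ext s
    have h1 := hg (epsF S F s)
    rw [eps_apply] at h1
    simp only [ContinuousMap.coe_mk] at h1
    rw [h1, hf0 (subset_closure (Set.mem_range_self s))]
    simp
  have h2 := hg μ
  rw [hgz] at h2
  simp only [map_zero, ContinuousMap.coe_mk] at h2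
  rw [hf1 rfl] at h2
  norm_num at h2

lemma open_subset_epsCl {U : Set (specF S F)} (hU : IsOpen U) {A : Set S}
    (hA : ∀ s : S, epsF S F s ∈ U → s ∈ A) : U ⊆ epsCl S F A := by
  intro x hx
  rw [epsCl, mem_closure_iff]
  intro o ho hxo
  have hx' : x ∈ closure (Set.range (epsF S F)) := by rw [closure_range_eps]; trivial
  rcases mem_closure_iff.mp hx' (o ∩ U) (ho.inter hU) ⟨hxo, hx⟩ with ⟨y, ⟨hyo, hyU⟩, s, rfl⟩
  exact ⟨epsF S F s, hyo, Set.mem_image_of_mem _ (hA s hyU)⟩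

lemma univ_mem_ZSet : Set.univ ∈ ZSet S F := by
  refine ⟨0, zero_mem _, ?_⟩
  ext s; simp

lemma zle (h : C(specF S F, ℝ)) (c : ℝ) : {s : S | h (epsF S F s) ≤ c} ∈ ZSet S F := by
  obtain ⟨g, hg⟩ := gelfand_surj ⟨fun x => ((max (h x - c) 0 : ℝ) : ℂ),
    Complex.continuous_ofReal.comp ((h.continuous.sub continuous_const).max continuous_const)⟩
  refine ⟨g, g.2, ?_⟩
  ext s
  have h1 := hg (epsF S F s)
  rw [eps_apply] at h1
  simp only [ContinuousMap.coe_mk] at h1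
  simp only [Set.mem_setOf_eq, h1, Complex.ofReal_eq_zero, max_eq_right_iff, sub_nonpos]

lemma zge (h : C(specF S F, ℝ)) (c : ℝ) : {s : S | c ≤ h (epsF S F s)} ∈ ZSet S F := by
  have h2 : {s : S | c ≤ h (epsF S F s)}
      = {s : S | (ContinuousMap.const (specF S F) c - h) (epsF S F s) ≤ 0} := by
    ext s; simp [sub_nonpos]
  rw [h2]; exact zle (ContinuousMap.const (specF S F) c - h) 0

set_option maxHeartbeats 2000000 in
lemma inter_mem_ZSet {A B : Set S} (hA : A ∈ ZSet S F) (hB : B ∈ ZSet S F) :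
    A ∩ B ∈ ZSet S F := by
  obtain ⟨f, hf, rfl⟩ := hA
  obtain ⟨g, hg, rfl⟩ := hB
  have hcont : Continuous fun φ : specF S F =>
      ‖φ ⟨f, hf⟩‖ + ‖φ ⟨g, hg⟩‖ :=
    (continuous_norm.comp (eval_char_continuous _)).add
      (continuous_norm.comp (eval_char_continuous _))
  have h2 : {s : S | f s = 0} ∩ {s : S | g s = 0}
      = {s : S | (⟨_, hcont⟩ : C(specF S F, ℝ)) (epsF S F s) ≤ 0} := by
    ext s
    simp only [Set.mem_inter_iff, Set.mem_setOf_eq, ContinuousMap.coe_mk, eps_apply]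
    constructor
    · rintro ⟨h1, h2⟩; simp [h1, h2]
    · intro h1
      have e1 : (0:ℝ) ≤ ‖(f : S →ᵇ ℂ) s‖ := norm_nonneg _
      have e2 : (0:ℝ) ≤ ‖(g : S →ᵇ ℂ) s‖ := norm_nonneg _
      constructor
      · have : ‖(f : S →ᵇ ℂ) s‖ = 0 := by linarith
        simpa using this
      · have : ‖(g : S →ᵇ ℂ) s‖ = 0 := by linarith
        simpa using this
  rw [h2]; exact zle _ 0

end Aux

section Aux2
variable {S F}

lemma zf_sub {p : Set (Set S)} (hp : IsZFilter S F p) : p ⊆ ZSet S F := hp.1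
lemma zf_univ {p : Set (Set S)} (hp : IsZFilter S F p) : Set.univ ∈ p := hp.2.2.1
lemma zf_inter {p : Set (Set S)} (hp : IsZFilter S F p) {A B : Set S} (hA : A ∈ p)
    (hB : B ∈ p) : A ∩ B ∈ p := hp.2.2.2.1 A hA B hB
lemma zf_up {p : Set (Set S)} (hp : IsZFilter S F p) {A B : Set S} (hA : A ∈ p)
    (hB : B ∈ ZSet S F) (hAB : A ⊆ B) : B ∈ p := hp.2.2.2.2 A hA B hB hAB

lemma zf_nonempty {p : Set (Set S)} (hp : IsZFilter S F p) {A : Set S} (hA : A ∈ p) :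
    A.Nonempty := by
  rcases Set.eq_empty_or_nonempty A with h | h
  · exact absurd (h ▸ hA) hp.2.1
  · exact h

lemma ultra_mem_of_forall_inter {p : Set (Set S)} (hp : p ∈ zUltra S F) {A : Set S}
    (hA : A ∈ ZSet S F) (h : ∀ B ∈ p, (A ∩ B).Nonempty) : A ∈ p := by
  set q := {C | C ∈ ZSet S F ∧ ∃ B ∈ p, A ∩ B ⊆ C} with hqdef
  have hq : IsZFilter S F q := by
    refine ⟨fun C hC => hC.1, ?_, ⟨univ_mem_ZSet, Set.univ, zf_univ hp.1, Set.subset_univ _⟩,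
      ?_, ?_⟩
    · rintro ⟨-, B, hB, hsub⟩
      exact absurd (Set.subset_empty_iff.mp hsub) (h B hB).ne_empty
    · rintro C1 ⟨hC1, B1, hB1, hs1⟩ C2 ⟨hC2, B2, hB2, hs2⟩
      exact ⟨inter_mem_ZSet hC1 hC2, B1 ∩ B2, zf_inter hp.1 hB1 hB2,
        fun x hx => ⟨hs1 ⟨hx.1, hx.2.1⟩, hs2 ⟨hx.1, hx.2.2⟩⟩⟩
    · rintro C1 ⟨hC1, B1, hB1, hs1⟩ C2 hC2 hsub
      exact ⟨hC2, B1, hB1, hs1.trans hsub⟩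
  have hpq : p ⊆ q := fun B hB => ⟨hp.1.1 hB, B, hB, Set.inter_subset_right⟩
  have heq := hp.2 q hq hpq
  rw [← heq]
  exact ⟨hA, Set.univ, zf_univ hp.1, fun x hx => hx.1⟩

lemma exists_ultra {L : Set (Set S)} (hL : IsZFilter S F L) :
    ∃ p ∈ zUltra S F, L ⊆ p := by
  have H : ∀ c ⊆ {q | IsZFilter S F q ∧ L ⊆ q}, IsChain (· ⊆ ·) c → c.Nonempty →
      ∃ ub ∈ {q | IsZFilter S F q ∧ L ⊆ q}, ∀ s ∈ c, s ⊆ ub := by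
    intro c hcS hchain hcne
    obtain ⟨q0, hq0⟩ := hcne
    refine ⟨⋃₀ c, ⟨⟨?_, ?_, ?_, ?_, ?_⟩, ?_⟩, fun s hs => Set.subset_sUnion_of_mem hs⟩
    · rintro A ⟨q, hq, hA⟩
      exact (hcS hq).1.1 hA
    · rintro ⟨q, hq, hA⟩
      exact (hcS hq).1.2.1 hA
    · exact ⟨q0, hq0, zf_univ (hcS hq0).1⟩
    · rintro A ⟨qa, hqa, hA⟩ B ⟨qb, hqb, hB⟩
      rcases hchain.total hqa hqb with hab | hba
      · exact ⟨qb, hqb, zf_inter (hcS hqb).1 (hab hA) hB⟩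
      · exact ⟨qa, hqa, zf_inter (hcS hqa).1 hA (hba hB)⟩
    · rintro A ⟨qa, hqa, hA⟩ B hB hAB
      exact ⟨qa, hqa, zf_up (hcS hqa).1 hA hB hAB⟩
    · exact ((hcS hq0).2).trans (Set.subset_sUnion_of_mem hq0)
  obtain ⟨m, hLm, hm⟩ := zorn_subset_nonempty {q | IsZFilter S F q ∧ L ⊆ q} H L ⟨hL, subset_rfl⟩
  have hmax : ∀ q, IsZFilter S F q → m ⊆ q → q = m := fun q hq hmq =>
    subset_antisymm (hm.2 ⟨hq, hm.1.2.trans hmq⟩ hmq) hmq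
  exact ⟨m, ⟨hm.1.1, hmax⟩, hm.1.2⟩

lemma mem_core {p : Set (Set S)} {μ : specF S F} :
    μ ∈ core S F p ↔ ∀ A ∈ p, μ ∈ epsCl S F A := by
  simp [core]

/-- The z-filter of zero sets whose `ε`-closure is a neighborhood of `μ`. -/
def Dmu (μ : specF S F) : Set (Set S) :=
  {A | A ∈ ZSet S F ∧ μ ∈ interior (epsCl S F A)}

lemma inter_interior_subset {A B : Set S} (hA : A ∈ ZSet S F) (hB : B ∈ ZSet S F) :
    interior (epsCl S F A) ∩ interior (epsCl S F B) ⊆ epsCl S F (A ∩ B) :=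
  open_subset_epsCl (isOpen_interior.inter isOpen_interior)
    (fun s hs => ⟨mem_of_eps_mem_epsCl hA (interior_subset hs.1),
      mem_of_eps_mem_epsCl hB (interior_subset hs.2)⟩)

lemma univ_mem_Dmu (μ : specF S F) : Set.univ ∈ Dmu (S := S) (F := F) μ := by
  refine ⟨univ_mem_ZSet, ?_⟩
  have : epsCl S F Set.univ = Set.univ := by
    rw [epsCl, Set.image_univ, closure_range_eps]
  rw [this, interior_univ]
  trivial

lemma Dmu_filter (μ : specF S F) : IsZFilter S F (Dmu (S := S) (F := F) μ) := by
  refine ⟨fun A hA => hA.1, ?_, univ_mem_Dmu μ, ?_, ?_⟩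
  · rintro ⟨-, hint⟩
    have : epsCl S F (∅ : Set S) = ∅ := by
      rw [epsCl, Set.image_empty, closure_empty]
    rw [this, interior_empty] at hint
    exact hint
  · rintro A ⟨hAZ, hAint⟩ B ⟨hBZ, hBint⟩
    refine ⟨inter_mem_ZSet hAZ hBZ, ?_⟩
    exact interior_maximal (inter_interior_subset hAZ hBZ)
      (isOpen_interior.inter isOpen_interior) ⟨hAint, hBint⟩
  · rintro A ⟨hAZ, hAint⟩ B hBZ hAB
    exact ⟨hBZ, interior_mono (epsCl_mono hAB) hAint⟩

lemma mem_core_of_Dmu_subset {q : Set (Set S)} (hq : q ∈ zUltra S F) {μ : specF S F}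
    (h : Dmu (S := S) (F := F) μ ⊆ q) : μ ∈ core S F q := by
  rw [mem_core]
  intro C hC
  by_contra hμC
  obtain ⟨f, hf0, hf1, -⟩ := exists_continuous_zero_one_of_isClosed
    (isClosed_singleton (x := μ)) (epsCl_closed (A := C))
    (Set.disjoint_singleton_left.mpr hμC)
  have hAZ := zle f (1/2)
  have hAD : {s : S | f (epsF S F s) ≤ 1/2} ∈ Dmu (S := S) (F := F) μ := by
    refine ⟨hAZ, ?_⟩
    have hO : IsOpen {x : specF S F | f x < 1/2} := isOpen_lt f.continuous continuous_const
    have hOsub : {x : specF S F | f x < 1/2} ⊆ epsCl S F {s : S | f (epsF S F s) ≤ 1/2} :=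
      open_subset_epsCl hO (fun s hs => show f (epsF S F s) ≤ 1/2 from le_of_lt hs)
    exact interior_maximal hOsub hO (by simp [hf0 rfl])
  have hdisj : {s : S | f (epsF S F s) ≤ 1/2} ∩ C = ∅ := by
    ext c
    simp only [Set.mem_inter_iff, Set.mem_setOf_eq, Set.mem_empty_iff_false, iff_false,
      not_and]
    intro hc1 hc2
    rw [hf1 (eps_mem_epsCl hc2)] at hc1
    norm_num at hc1
  have := zf_inter hq.1 (h hAD) hC
  rw [hdisj] at this
  exact hq.1.2.1 this

lemma mem_ultra_of_interior {q : Set (Set S)} (hq : q ∈ zUltra S F) {μ : specF S F}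
    (hμ : μ ∈ core S F q) {A : Set S} (hA : A ∈ ZSet S F)
    (h : μ ∈ interior (epsCl S F A)) : A ∈ q := by
  refine ultra_mem_of_forall_inter hq hA (fun B hB => ?_)
  have hμB : μ ∈ epsCl S F B := mem_core.mp hμ B hB
  rcases mem_closure_iff.mp hμB _ isOpen_interior h with ⟨y, hyU, b, hbB, rfl⟩
  exact ⟨b, mem_of_eps_mem_epsCl hA (interior_subset hyU), hbB⟩

lemma core_nonempty {p : Set (Set S)} (hp : p ∈ zUltra S F) : (core S F p).Nonempty := by
  haveI : Nonempty {A // A ∈ p} := ⟨⟨Set.univ, zf_univ hp.1⟩⟩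
  have hcore : core S F p = ⋂ i : {A // A ∈ p}, epsCl S F i.1 := by
    rw [core, Set.biInter_eq_iInter]
  rw [hcore]
  refine IsCompact.nonempty_iInter_of_directed_nonempty_isCompact_isClosed _ ?_ ?_
    (fun i => epsCl_closed.isCompact) (fun i => epsCl_closed)
  · intro i j
    exact ⟨⟨i.1 ∩ j.1, zf_inter hp.1 i.2 j.2⟩,
      epsCl_mono Set.inter_subset_left, epsCl_mono Set.inter_subset_right⟩
  · intro i
    obtain ⟨s, hs⟩ := zf_nonempty hp.1 i.2
    exact ⟨epsF S F s, eps_mem_epsCl hs⟩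

lemma core_subsingleton {p : Set (Set S)} (hp : p ∈ zUltra S F) {μ ν : specF S F}
    (hμ : μ ∈ core S F p) (hν : ν ∈ core S F p) : μ = ν := by
  by_contra hne
  obtain ⟨f, hf0, hf1, -⟩ := exists_continuous_zero_one_of_isClosed
    (isClosed_singleton (x := μ)) (isClosed_singleton (x := ν))
    (by simpa [Set.disjoint_singleton] using hne)
  have hAZ := zle f (1/2)
  have hAp : {s : S | f (epsF S F s) ≤ 1/2} ∈ p := by
    refine ultra_mem_of_forall_inter hp hAZ (fun B hB => ?_)
    have hμB : μ ∈ epsCl S F B := mem_core.mp hμ B hB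
    have hO : IsOpen {x : specF S F | f x < 1/2} := isOpen_lt f.continuous continuous_const
    rcases mem_closure_iff.mp hμB _ hO (by simp [hf0 rfl]) with ⟨y, hyU, b, hbB, rfl⟩
    exact ⟨b, show f (epsF S F b) ≤ 1/2 from le_of_lt hyU, hbB⟩
  have hνA : ν ∈ epsCl S F {s : S | f (epsF S F s) ≤ 1/2} :=
    mem_core.mp hν _ hAp
  have hsub : epsCl S F {s : S | f (epsF S F s) ≤ 1/2} ⊆ {x : specF S F | f x ≤ 1/2} :=
    epsCl_subset_closed (isClosed_le f.continuous continuous_const) (fun s hs => hs)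
  have := hsub hνA
  rw [Set.mem_setOf_eq, hf1 rfl] at this
  norm_num at this

lemma core_eq_singleton {p : Set (Set S)} (hp : p ∈ zUltra S F) :
    ∃ μ : specF S F, core S F p = {μ} := by
  obtain ⟨μ, hμ⟩ := core_nonempty hp
  exact ⟨μ, Set.eq_singleton_iff_unique_mem.mpr ⟨hμ, fun ν hν => core_subsingleton hp hν hμ⟩⟩

end Aux2

section Aux3
variable {S F}

lemma barSet_eq {L : Set (Set S)} (hL : IsZFilter S F L) :
    barSet S F L = ⋂ B ∈ L, epsCl S F B := by
  apply subset_antisymm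
  · rintro μ ⟨p, hp, hLp, hcore⟩
    rw [Set.mem_iInter₂]
    intro B hB
    have h1 : core S F p ⊆ epsCl S F B := Set.biInter_subset_of_mem (hLp hB)
    apply h1
    rw [hcore]
    rfl
  · intro μ hμ
    rw [Set.mem_iInter₂] at hμ
    have hkey : ∀ B ∈ L, ∀ A ∈ Dmu (S := S) (F := F) μ, (B ∩ A).Nonempty := by
      intro B hB A hA
      rcases mem_closure_iff.mp (hμ B hB) _ isOpen_interior hA.2 with ⟨y, hyU, b, hbB, rfl⟩
      exact ⟨b, hbB, mem_of_eps_mem_epsCl hA.1 (interior_subset hyU)⟩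
    set q0 := {C | C ∈ ZSet S F ∧ ∃ B ∈ L, ∃ A ∈ Dmu (S := S) (F := F) μ, B ∩ A ⊆ C} with hq0def
    have hq0 : IsZFilter S F q0 := by
      refine ⟨fun C hC => hC.1, ?_, ?_, ?_, ?_⟩
      · rintro ⟨-, B, hB, A, hA, hsub⟩
        exact absurd (Set.subset_empty_iff.mp hsub) (hkey B hB A hA).ne_empty
      · exact ⟨univ_mem_ZSet, Set.univ, zf_univ hL, Set.univ, univ_mem_Dmu μ,
          Set.subset_univ _⟩
      · rintro C1 ⟨hC1, B1, hB1, A1, hA1, hs1⟩ C2 ⟨hC2, B2, hB2, A2, hA2, hs2⟩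
        refine ⟨inter_mem_ZSet hC1 hC2, B1 ∩ B2, zf_inter hL hB1 hB2, A1 ∩ A2,
          zf_inter (Dmu_filter μ) hA1 hA2, ?_⟩
        intro x hx
        exact ⟨hs1 ⟨hx.1.1, hx.2.1⟩, hs2 ⟨hx.1.2, hx.2.2⟩⟩
      · rintro C1 ⟨hC1, B1, hB1, A1, hA1, hs1⟩ C2 hC2 hsub
        exact ⟨hC2, B1, hB1, A1, hA1, hs1.trans hsub⟩
    obtain ⟨p, hp, hq0p⟩ := exists_ultra hq0
    have hLp : L ⊆ p := fun B hB => hq0p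
      ⟨hL.1 hB, B, hB, Set.univ, univ_mem_Dmu μ, fun x hx => hx.1⟩
    have hDp : Dmu (S := S) (F := F) μ ⊆ p := fun A hA => hq0p
      ⟨hA.1, Set.univ, zf_univ hL, A, hA, fun x hx => hx.2⟩
    have hμcore : μ ∈ core S F p := mem_core_of_Dmu_subset hp hDp
    obtain ⟨ν, hν⟩ := core_eq_singleton hp
    have hμν : μ = ν := by
      have := hν ▸ hμcore
      exact this
    exact ⟨p, hp, hLp, hμν ▸ hν⟩

lemma barSet_closed {L : Set (Set S)} (hL : IsZFilter S F L) :
    IsClosed (barSet S F L) := by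
  rw [barSet_eq hL]
  exact isClosed_biInter (fun B hB => epsCl_closed)

/-- Key lemma: if `bar(L)` is contained in the interior of `cl ε(A)`, then `A ∈ L`. -/
lemma mem_of_barSet_subset {L : Set (Set S)} (hL : IsZFilter S F L) {A : Set S}
    (hA : A ∈ ZSet S F) (h : barSet S F L ⊆ interior (epsCl S F A)) : A ∈ L := by
  rw [barSet_eq hL] at h
  have hex : ∃ B ∈ L, epsCl S F B ∩ (interior (epsCl S F A))ᶜ = ∅ := by
    by_contra hcon
    push_neg at hcon
    haveI : Nonempty {B // B ∈ L} := ⟨⟨Set.univ, zf_univ hL⟩⟩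
    have hne : (⋂ i : {B // B ∈ L}, (epsCl S F i.1 ∩ (interior (epsCl S F A))ᶜ)).Nonempty := by
      refine IsCompact.nonempty_iInter_of_directed_nonempty_isCompact_isClosed _ ?_ ?_
        (fun i => (epsCl_closed.inter (isOpen_interior.isClosed_compl)).isCompact)
        (fun i => epsCl_closed.inter (isOpen_interior.isClosed_compl))
      · intro i j
        exact ⟨⟨i.1 ∩ j.1, zf_inter hL i.2 j.2⟩,
          fun x hx => ⟨epsCl_mono Set.inter_subset_left hx.1, hx.2⟩,
          fun x hx => ⟨epsCl_mono Set.inter_subset_right hx.1, hx.2⟩⟩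
      · intro i
        exact hcon i.1 i.2
    obtain ⟨x, hx⟩ := hne
    rw [Set.mem_iInter] at hx
    have hx1 : x ∈ ⋂ B ∈ L, epsCl S F B := by
      rw [Set.mem_iInter₂]
      exact fun B hB => (hx ⟨B, hB⟩).1
    exact (hx ⟨Set.univ, zf_univ hL⟩).2 (h hx1)
  obtain ⟨B, hB, hBe⟩ := hex
  have hBsub : B ⊆ A := by
    intro s hs
    have h1 : epsF S F s ∈ epsCl S F B := eps_mem_epsCl hs
    have h2 : epsF S F s ∈ interior (epsCl S F A) := by
      by_contra hc
      have : epsF S F s ∈ epsCl S F B ∩ (interior (epsCl S F A))ᶜ := ⟨h1, hc⟩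
      rw [hBe] at this
      exact this
    exact mem_of_eps_mem_epsCl hA (interior_subset h2)
  exact zf_up hL hB hA hBsub

lemma tilde_subset {p : Set (Set S)} (hp : p ∈ zUltra S F) : tilde S F p ⊆ p :=
  Set.sInter_subset_of_mem ⟨hp, rfl⟩

lemma tilde_congr {p q : Set (Set S)} (h : core S F p = core S F q) :
    tilde S F p = tilde S F q := by
  unfold tilde
  rw [h]

end Aux3

/-- Theorem 3.2, (b) ↔ (b'). -/
theorem statement1
    (hr : ∀ s : S, Continuous (fun t => t * s))
    (hF : (F.carrier : Set (S →ᵇ ℂ)) = LMCset S hl)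
    (Γ : Set (Set (Set S))) (hΓ : ∀ L ∈ Γ, IsPure S F L) :
    (∀ L ∈ Γ, ∀ K ∈ Γ, L ≠ K → ∃ B ∈ circA S F K,
        ∀ A ∈ ZSet S F, (interior (epsCl S F B))ᶜ ⊆ interior (epsCl S F A) → A ∈ L) ↔
      (∀ p ∈ zUltra S F, ∀ L ∈ Γ, ∀ K ∈ Γ,
        L ⊆ tilde S F p → K ⊆ tilde S F p → L = K) := by
  constructor
  · -- (b) → (b')
    intro hb p hp L hL K hK hLp hKp
    by_contra hne
    obtain ⟨B, hBcirc, hstar⟩ := hb L hL K hK hne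
    obtain ⟨μ, hμ⟩ := core_eq_singleton hp
    have hμcore : μ ∈ core S F p := by rw [hμ]; rfl
    have hμbar : μ ∈ barSet S F K := ⟨p, hp, hKp.trans (tilde_subset hp), hμ⟩
    have hμint : μ ∈ interior (epsCl S F B) := hBcirc.2 hμbar
    obtain ⟨f, hf0, hf1, -⟩ := exists_continuous_zero_one_of_isClosed
      (isClosed_singleton (x := μ))
      ((isOpen_interior : IsOpen (interior (epsCl S F B))).isClosed_compl)
      (Set.disjoint_singleton_left.mpr (fun hc => hc hμint))
    have hAZ := zge f (1/2)
    have hsub : (interior (epsCl S F B))ᶜ ⊆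
        interior (epsCl S F {s : S | 1/2 ≤ f (epsF S F s)}) := by
      have hO : IsOpen {x : specF S F | 1/2 < f x} := isOpen_lt continuous_const f.continuous
      have hOsub : {x : specF S F | 1/2 < f x} ⊆ epsCl S F {s : S | 1/2 ≤ f (epsF S F s)} :=
        open_subset_epsCl hO (fun s hs => show (1:ℝ)/2 ≤ f (epsF S F s) from le_of_lt hs)
      intro x hx
      have hx' : (1:ℝ)/2 < f x := by rw [hf1 hx]; norm_num
      exact interior_maximal hOsub hO hx'
    have hAL : {s : S | 1/2 ≤ f (epsF S F s)} ∈ L := hstar _ hAZ hsub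
    have hAp : {s : S | 1/2 ≤ f (epsF S F s)} ∈ p := tilde_subset hp (hLp hAL)
    have hμA : μ ∈ epsCl S F {s : S | 1/2 ≤ f (epsF S F s)} := mem_core.mp hμcore _ hAp
    have hsub2 : epsCl S F {s : S | 1/2 ≤ f (epsF S F s)} ⊆ {x : specF S F | 1/2 ≤ f x} :=
      epsCl_subset_closed (isClosed_le continuous_const f.continuous) (fun s hs => hs)
    have := hsub2 hμA
    rw [Set.mem_setOf_eq, hf0 rfl] at this
    norm_num at this
  · -- (b') → (b)
    intro hb' L hL K hK hne
    have hdisj : Disjoint (barSet S F L) (barSet S F K) := by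
      rw [Set.disjoint_left]
      rintro μ ⟨p, hp, hLp, hcp⟩ ⟨q, hq, hKq, hcq⟩
      have htq : tilde S F q = tilde S F p := tilde_congr (by rw [hcp, hcq])
      exact hne (hb' p hp L hL K hK ((hΓ L hL).2 p hp hLp)
        (htq ▸ (hΓ K hK).2 q hq hKq))
    obtain ⟨f, hf0, hf1, -⟩ := exists_continuous_zero_one_of_isClosed
      (barSet_closed (hΓ L hL).1) (barSet_closed (hΓ K hK).1) hdisj
    have hBZ := zge f (1/2)
    have hO : IsOpen {x : specF S F | 1/2 < f x} := isOpen_lt continuous_const f.continuous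
    have hOsub : {x : specF S F | 1/2 < f x} ⊆ epsCl S F {s : S | 1/2 ≤ f (epsF S F s)} :=
      open_subset_epsCl hO (fun s hs => show (1:ℝ)/2 ≤ f (epsF S F s) from le_of_lt hs)
    have hBint : barSet S F K ⊆ interior (epsCl S F {s : S | 1/2 ≤ f (epsF S F s)}) := by
      intro μ hμ
      have hx' : (1:ℝ)/2 < f μ := by rw [hf1 hμ]; norm_num
      exact interior_maximal hOsub hO hx'
    have hBK : {s : S | 1/2 ≤ f (epsF S F s)} ∈ K :=
      mem_of_barSet_subset (hΓ K hK).1 hBZ hBint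
    refine ⟨_, ⟨hBK, hBint⟩, ?_⟩
    intro A hA hsub
    apply mem_of_barSet_subset (hΓ L hL).1 hA
    refine Set.Subset.trans ?_ hsub
    intro μ hμ hμint
    have hsub2 : epsCl S F {s : S | 1/2 ≤ f (epsF S F s)} ⊆ {x : specF S F | 1/2 ≤ f x} :=
      epsCl_subset_closed (isClosed_le continuous_const f.continuous) (fun s hs => hs)
    have := hsub2 (interior_subset hμint)
    rw [Set.mem_setOf_eq, hf0 hμ] at this
    norm_num at this

end
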